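/- Let $n \ge 2$, $1 \le p < n$, $\frac{1}{\bar p} = \frac{1}{p} - \frac{1}{n}$, and $T > 0$. Let $f : (0,T) \to [0,\infty)$ be nonincreasing, locally absolutely continuous, with $f(T^-) = 0$, and suppose $\int_0^T \left(t^{1-\frac{1}{n}} (-f'(t))\right)^p dt < \infty$ and apriori $\int_0^T t^{-p/n} (f^{**}(t) - f(t))^p dt < \infty$, where $f^{**}(t) = \frac{1}{t}\int_0^t f$. Then $\left(\int_0^T \left((f^{**}(t) - f(t))\, t^{1/\bar p}\right)^p \frac{dt}{t}\right)^{1/p} \le C_{n,p} \left(\int_0^T \left(t^{1 - \frac{1}{n}} (-f'(t))\right)^p dt\right)^{1/p}$ for a constant $C_{n,p}$ depending only on $n$ and $p$. -/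

import Mathlib

open MeasureTheory Real intervalIntegral Filter

lemma my_young {a b p : ℝ} (ha : 0 ≤ a) (hb : 0 ≤ b) (hp : 1 ≤ p) :
    a ^ (p - 1) * b ≤ (p - 1) / p * a ^ p + 1 / p * b ^ p := by
  have hp0 : (0:ℝ) < p := lt_of_lt_of_le one_pos hp
  have h := Real.geom_mean_le_arith_mean2_weighted (w₁ := (p-1)/p) (w₂ := 1/p)
      (p₁ := a ^ p) (p₂ := b ^ p) (div_nonneg (by linarith) hp0.le) (by positivity)
      (Real.rpow_nonneg ha p) (Real.rpow_nonneg hb p) (by field_simp; ring)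
  calc a ^ (p-1) * b = (a ^ p) ^ ((p-1)/p) * (b ^ p) ^ (1/p) := by
        rw [← Real.rpow_mul ha, ← Real.rpow_mul hb]
        rw [show p * ((p-1)/p) = p - 1 by field_simp, show p * (1/p) = 1 by field_simp,
          Real.rpow_one]
    _ ≤ _ := h

lemma my_not_int {a : ℝ} (ha : 0 < a) :
    ¬ IntegrableOn (fun x : ℝ => x⁻¹) (Set.Ioo 0 a) := by
  intro h
  have h2 : IntegrableOn (fun x : ℝ => x ^ (-1 : ℝ)) (Set.Ioo 0 a) :=
    h.congr_fun (fun x _ => (Real.rpow_neg_one x).symm) measurableSet_Ioo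
  have := (integrableOn_Ioo_rpow_iff ha).1 h2
  linarith

lemma my_rpow_sub_one {x p : ℝ} (hx : 0 ≤ x) (hp : 1 ≤ p) : x ^ (p - 1) * x = x ^ p := by
  rcases eq_or_lt_of_le hx with h | h
  · rw [← h, mul_zero, Real.zero_rpow (by positivity)]
  · rw [← Real.rpow_add_one (ne_of_gt h), sub_add_cancel]

lemma my_rpow_le_add_one {x p : ℝ} (hx : 0 ≤ x) (hp : 1 ≤ p) : x ^ (1/p) ≤ 1 + x := by
  have hp0 : (0:ℝ) < p := lt_of_lt_of_le one_pos hp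
  rcases le_or_gt x 1 with h | h
  · have := Real.rpow_le_one hx h (by positivity : (0:ℝ) ≤ 1/p)
    linarith
  · have h1 : x ^ (1/p) ≤ x ^ (1:ℝ) := by
      apply Real.rpow_le_rpow_of_exponent_le h.le
      rw [div_le_one hp0]; exact hp
    rw [Real.rpow_one] at h1; linarith

lemma my_deriv_nonpos {f : ℝ → ℝ} {a T t : ℝ} (hanti : AntitoneOn f (Set.Ioo 0 T))
    (ht : t ∈ Set.Ioo (0:ℝ) T) (hd : HasDerivAt f a t) : a ≤ 0 := by
  have h1 : Tendsto (slope f t) (nhdsWithin t (Set.Ioi t)) (nhds a) :=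
    (hasDerivAt_iff_tendsto_slope.1 hd).mono_left
      (nhdsWithin_mono t (fun x hx => ne_of_gt hx))
  refine le_of_tendsto h1 ?_
  filter_upwards [Ioo_mem_nhdsGT_of_mem ⟨le_refl t, ht.2⟩] with x hx
  rw [slope_def_field]
  apply div_nonpos_of_nonpos_of_nonneg
  · have : f x ≤ f t := hanti ht ⟨lt_trans ht.1 hx.1, hx.2⟩ hx.1.le
    linarith
  · linarith [hx.1]

lemma my_union1 {a T : ℝ} (ha : 0 < a) (haT : a < T) :
    (⋃ k : ℕ, Set.Ioc a (T - (T - a)/(k+1))) = Set.Ioo a T := by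
  ext x
  simp only [Set.mem_iUnion, Set.mem_Ioc, Set.mem_Ioo]
  constructor
  · rintro ⟨k, hax, hxk⟩
    refine ⟨hax, lt_of_le_of_lt hxk ?_⟩
    have h4 : (0:ℝ) < T - a := by linarith
    have : (0:ℝ) < (T - a)/(k+1) := by positivity
    linarith
  · rintro ⟨hax, hxT⟩
    obtain ⟨k, hk⟩ := exists_nat_gt ((T - a)/(T - x))
    refine ⟨k, hax, ?_⟩
    have hTx : (0:ℝ) < T - x := by linarith
    have hk1 : (T - a)/(T - x) < (k:ℝ) + 1 := lt_trans hk (lt_add_one _)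
    have h2 : T - a < ((k:ℝ) + 1) * (T - x) := (div_lt_iff₀ hTx).1 hk1
    have h3 : (T - a)/((k:ℝ) + 1) < T - x := by
      rw [div_lt_iff₀ (by positivity)]
      linarith
    linarith

lemma my_union2 {T : ℝ} (hT : 0 < T) :
    (⋃ k : ℕ, Set.Ioo (T/(k+2)) T) = Set.Ioo 0 T := by
  ext x
  simp only [Set.mem_iUnion, Set.mem_Ioo]
  constructor
  · rintro ⟨k, hkx, hxT⟩
    exact ⟨lt_trans (by positivity) hkx, hxT⟩
  · rintro ⟨hx0, hxT⟩
    obtain ⟨k, hk⟩ := exists_nat_gt (T/x)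
    refine ⟨k, ?_, hxT⟩
    have hk2 : T/x < (k:ℝ) + 2 := by linarith [hk]
    have h2 : T < ((k:ℝ) + 2) * x := (div_lt_iff₀ hx0).1 hk2
    rw [div_lt_iff₀ (by positivity)]
    linarith


noncomputable def uu (f : ℝ → ℝ) (t : ℝ) : ℝ := (1 / t) * (∫ s in (0:ℝ)..t, f s) - f t
noncomputable def gg (n : ℕ) (p : ℝ) (f : ℝ → ℝ) (t : ℝ) : ℝ := t ^ (-(p/(n:ℝ))) * uu f t ^ p
noncomputable def hh (n : ℕ) (p : ℝ) (f f' : ℝ → ℝ) (t : ℝ) : ℝ :=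
  t ^ (1 - p/(n:ℝ)) * uu f t ^ (p-1) * (-f' t)
noncomputable def FF (n : ℕ) (p : ℝ) (f : ℝ → ℝ) (t : ℝ) : ℝ :=
  uu f t ^ p * t ^ (1 - p/(n:ℝ))

section lems
variable {n : ℕ} {p T : ℝ} {f f' : ℝ → ℝ}

lemma intInt (hfi : IntegrableOn f (Set.Ioo 0 T)) {t : ℝ} (ht : t ∈ Set.Ioo (0:ℝ) T) :
    IntervalIntegrable f volume 0 t := by
  rw [intervalIntegrable_iff, Set.uIoc_of_le ht.1.le]
  exact hfi.mono_set (fun x hx => ⟨hx.1, lt_of_le_of_lt hx.2 ht.2⟩)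

lemma uu_nonneg (hanti : AntitoneOn f (Set.Ioo 0 T))
    (hfi : IntegrableOn f (Set.Ioo 0 T)) {t : ℝ} (ht : t ∈ Set.Ioo (0:ℝ) T) :
    0 ≤ uu f t := by
  have h1 : (∫ _ in Set.Ioc (0:ℝ) t, f t) ≤ ∫ s in Set.Ioc (0:ℝ) t, f s := by
    apply setIntegral_mono_on (integrableOn_const measure_Ioc_lt_top.ne)
      (hfi.mono_set (fun x hx => ⟨hx.1, lt_of_le_of_lt hx.2 ht.2⟩)) measurableSet_Ioc
    intro s hs
    exact hanti ⟨hs.1, lt_of_le_of_lt hs.2 ht.2⟩ ht hs.2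
  rw [setIntegral_const, measureReal_def, Real.volume_Ioc, smul_eq_mul,
    ENNReal.toReal_ofReal (by linarith [ht.1] : (0:ℝ) ≤ t - 0), sub_zero] at h1
  have h2 : (∫ s in (0:ℝ)..t, f s) = ∫ s in Set.Ioc (0:ℝ) t, f s :=
    intervalIntegral.integral_of_le ht.1.le
  have ht0 : (0:ℝ) < t := ht.1
  show 0 ≤ (1 / t) * (∫ s in (0:ℝ)..t, f s) - f t
  rw [h2, sub_nonneg]
  have : 1 / t * (t * f t) ≤ 1 / t * ∫ s in Set.Ioc (0:ℝ) t, f s :=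
    mul_le_mul_of_nonneg_left h1 (by positivity)
  rw [show 1 / t * (t * f t) = f t by field_simp] at this
  linarith

lemma uu_hasDeriv (hfi : IntegrableOn f (Set.Ioo 0 T))
    (hcont : ContinuousOn f (Set.Ioo 0 T))
    (hderiv : ∀ t ∈ Set.Ioo (0 : ℝ) T, HasDerivAt f (f' t) t)
    {t : ℝ} (ht : t ∈ Set.Ioo (0:ℝ) T) :
    HasDerivAt (uu f) (-(uu f t) * t⁻¹ - f' t) t := by
  have hIt : HasDerivAt (fun x => ∫ s in (0:ℝ)..x, f s) (f t) t := by
    apply intervalIntegral.integral_hasDerivAt_right (intInt hfi ht)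
      ⟨Set.Ioo 0 T, isOpen_Ioo.mem_nhds ht, hcont.aestronglyMeasurable measurableSet_Ioo⟩
      (hderiv t ht).continuousAt
  have ht0 : (0:ℝ) < t := ht.1
  have h1 : HasDerivAt (fun x : ℝ => (1/x) * ∫ s in (0:ℝ)..x, f s)
      (-(t^2)⁻¹ * (∫ s in (0:ℝ)..t, f s) + t⁻¹ * f t) t := by
    have h2 := (hasDerivAt_inv (ne_of_gt ht0)).mul hIt
    simp only [one_div]
    exact h2
  have h3 := h1.sub (hderiv t ht)
  have h4 : -(uu f t) * t⁻¹ - f' t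
      = -(t^2)⁻¹ * (∫ s in (0:ℝ)..t, f s) + t⁻¹ * f t - f' t := by
    show -((1 / t) * (∫ s in (0:ℝ)..t, f s) - f t) * t⁻¹ - f' t = _
    field_simp
    ring
  rw [h4]
  exact h3

lemma FF_hasDeriv (hp1 : 1 ≤ p) (hanti : AntitoneOn f (Set.Ioo 0 T))
    (hfi : IntegrableOn f (Set.Ioo 0 T))
    (hcont : ContinuousOn f (Set.Ioo 0 T))
    (hderiv : ∀ t ∈ Set.Ioo (0 : ℝ) T, HasDerivAt f (f' t) t)
    {t : ℝ} (ht : t ∈ Set.Ioo (0:ℝ) T) :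
    HasDerivAt (FF n p f) ((1 - p/(n:ℝ) - p) * gg n p f t + p * hh n p f f' t) t := by
  have ht0 : (0:ℝ) < t := ht.1
  have hut := uu_nonneg hanti hfi ht
  have hv : HasDerivAt (fun s => uu f s ^ p)
      (p * uu f t ^ (p-1) * (-(uu f t) * t⁻¹ - f' t)) t := by
    have h2 := (Real.hasDerivAt_rpow_const (p := p) (x := uu f t) (Or.inr hp1)).comp t
      (uu_hasDeriv hfi hcont hderiv ht)
    exact h2
  have hw : HasDerivAt (fun s : ℝ => s ^ (1 - p/(n:ℝ)))
      ((1 - p/(n:ℝ)) * t ^ (1 - p/(n:ℝ) - 1)) t :=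
    Real.hasDerivAt_rpow_const (Or.inl (ne_of_gt ht0))
  have hFt := hv.mul hw
  have e1 : t ^ (1 - p/(n:ℝ) - 1) = t ^ (-(p/(n:ℝ))) := by
    rw [show (1 - p/(n:ℝ) - 1) = -(p/(n:ℝ)) by ring]
  have e2 : t ^ (1 - p/(n:ℝ)) = t * t ^ (-(p/(n:ℝ))) := by
    rw [show (1 - p/(n:ℝ)) = 1 + -(p/(n:ℝ)) by ring, Real.rpow_add ht0, Real.rpow_one]
  have e3 : uu f t ^ (p-1) * uu f t = uu f t ^ p := my_rpow_sub_one hut hp1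
  convert hFt using 1
  · rfl
  · rfl
  · rfl
  simp only [gg, hh, FF]
  rw [e1, e2, ← e3]
  field_simp
  ring

lemma young_pt (hp1 : 1 ≤ p) (hanti : AntitoneOn f (Set.Ioo 0 T))
    (hfi : IntegrableOn f (Set.Ioo 0 T))
    (hf'np : ∀ t ∈ Set.Ioo (0:ℝ) T, f' t ≤ 0)
    {t : ℝ} (ht : t ∈ Set.Ioo (0:ℝ) T) :
    hh n p f f' t ≤ (p-1)/p * gg n p f t + 1/p * (t ^ (1 - 1/(n:ℝ)) * (-f' t)) ^ p := by
  have ht0 : (0:ℝ) < t := ht.1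
  have hut := uu_nonneg hanti hfi ht
  have hf't : 0 ≤ -f' t := by linarith [hf'np t ht]
  have h1 := my_young (a := t ^ (-(1:ℝ)/(n:ℝ)) * uu f t) (b := t ^ (1 - 1/(n:ℝ)) * (-f' t))
    (mul_nonneg (Real.rpow_nonneg ht0.le _) hut)
    (mul_nonneg (Real.rpow_nonneg ht0.le _) hf't) hp1
  have e4 : (t ^ (-(1:ℝ)/(n:ℝ)) * uu f t) ^ (p-1) * (t ^ (1 - 1/(n:ℝ)) * (-f' t))
      = hh n p f f' t := by
    rw [Real.mul_rpow (Real.rpow_nonneg ht0.le _) hut, ← Real.rpow_mul ht0.le]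
    simp only [hh]
    rw [show (1 - p/(n:ℝ)) = -(1:ℝ)/(n:ℝ) * (p-1) + (1 - 1/(n:ℝ)) by ring,
      Real.rpow_add ht0]
    ring
  have e5 : (t ^ (-(1:ℝ)/(n:ℝ)) * uu f t) ^ p = gg n p f t := by
    rw [Real.mul_rpow (Real.rpow_nonneg ht0.le _) hut, ← Real.rpow_mul ht0.le]
    simp only [gg]
    rw [show -(1:ℝ)/(n:ℝ) * p = -(p/(n:ℝ)) by ring]
  rw [e4, e5] at h1
  exact h1

end lems


set_option maxHeartbeats 1000000 in
theorem stmt17 (n : ℕ) (hn : 2 ≤ n) (p : ℝ) (hp1 : 1 ≤ p) (hpn : p < n)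
    (pbar : ℝ) (hpbar : 1 / pbar = 1 / p - 1 / n) :
    ∃ C : ℝ, 0 < C ∧
      ∀ (T : ℝ), 0 < T →
      ∀ (f f' : ℝ → ℝ),
        (∀ s, 0 < s → s < T → 0 ≤ f s) →
        AntitoneOn f (Set.Ioo 0 T) →
        (∀ t ∈ Set.Ioo (0 : ℝ) T, HasDerivAt f (f' t) t) →
        Tendsto f (nhdsWithin T (Set.Iio T)) (nhds 0) →
        IntegrableOn (fun t => (t ^ (1 - 1 / (n : ℝ)) * (-f' t)) ^ p) (Set.Ioo 0 T) →
        IntegrableOn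
          (fun t => t ^ (-(p / n)) * (((1 / t) * ∫ s in (0 : ℝ)..t, f s) - f t) ^ p)
          (Set.Ioo 0 T) →
        (∫ t in (0 : ℝ)..T,
            ((((1 / t) * ∫ s in (0 : ℝ)..t, f s) - f t) * t ^ (1 / pbar)) ^ p / t)
            ^ (1 / p)
          ≤ C * (∫ t in (0 : ℝ)..T, (t ^ (1 - 1 / (n : ℝ)) * (-f' t)) ^ p) ^ (1 / p) := by
  have hn2 : (2:ℝ) ≤ (n:ℝ) := by exact_mod_cast hn
  have hn0 : (0:ℝ) < (n:ℝ) := by linarith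
  have hp0 : (0:ℝ) < p := lt_of_lt_of_le one_pos hp1
  refine ⟨((n:ℝ)/p) ^ ((1:ℝ)/p), Real.rpow_pos_of_pos (by positivity) _, ?_⟩
  intro T hT f f' hfnn hanti hderiv _ hB hG
  have hcont : ContinuousOn f (Set.Ioo 0 T) :=
    fun x hx => (hderiv x hx).continuousAt.continuousWithinAt
  have hf'np : ∀ t ∈ Set.Ioo (0:ℝ) T, f' t ≤ 0 :=
    fun t ht => my_deriv_nonpos hanti ht (hderiv t ht)
  set b : ℝ → ℝ := fun t => (t ^ (1 - 1 / (n : ℝ)) * (-f' t)) ^ p with hbdef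
  have hbnn : ∀ t ∈ Set.Ioo (0:ℝ) T, 0 ≤ b t := fun t ht =>
    Real.rpow_nonneg
      (mul_nonneg (Real.rpow_nonneg ht.1.le _) (by linarith [hf'np t ht])) _
  have hRHSint : (∫ t in (0:ℝ)..T, b t) = ∫ t in Set.Ioo (0:ℝ) T, b t := by
    rw [intervalIntegral.integral_of_le hT.le, MeasureTheory.integral_Ioc_eq_integral_Ioo]
  have hBnn : 0 ≤ ∫ t in Set.Ioo (0:ℝ) T, b t :=
    setIntegral_nonneg measurableSet_Ioo hbnn
  by_cases hfi : IntegrableOn f (Set.Ioo 0 T)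
  · -- main case
    have hGg : IntegrableOn (gg n p f) (Set.Ioo 0 T) := hG
    have hgnn : ∀ t ∈ Set.Ioo (0:ℝ) T, 0 ≤ gg n p f t := by
      intro t ht
      exact mul_nonneg (Real.rpow_nonneg ht.1.le _)
        (Real.rpow_nonneg (uu_nonneg hanti hfi ht) _)
    have hhnn : ∀ t ∈ Set.Ioo (0:ℝ) T, 0 ≤ hh n p f f' t := by
      intro t ht
      exact mul_nonneg (mul_nonneg (Real.rpow_nonneg ht.1.le _)
        (Real.rpow_nonneg (uu_nonneg hanti hfi ht) _)) (by linarith [hf'np t ht])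
    have hFnn : ∀ t ∈ Set.Ioo (0:ℝ) T, 0 ≤ FF n p f t := by
      intro t ht
      exact mul_nonneg (Real.rpow_nonneg (uu_nonneg hanti hfi ht) _)
        (Real.rpow_nonneg ht.1.le _)
    have hf'meas : AEStronglyMeasurable f' (volume.restrict (Set.Ioo 0 T)) := by
      have h1 : ∀ᵐ t ∂(volume.restrict (Set.Ioo 0 T)), deriv f t = f' t := by
        rw [ae_restrict_iff' measurableSet_Ioo]
        exact ae_of_all _ (fun t ht => (hderiv t ht).deriv)
      exact (measurable_deriv f).aestronglyMeasurable.congr h1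
    have hucont : ContinuousOn (uu f) (Set.Ioo 0 T) := fun t ht =>
      ((uu_hasDeriv hfi hcont hderiv ht).continuousAt).continuousWithinAt
    have hhmeas : AEStronglyMeasurable (hh n p f f') (volume.restrict (Set.Ioo 0 T)) := by
      have h2 : AEStronglyMeasurable (fun t : ℝ => t ^ (1 - p/(n:ℝ)))
          (volume.restrict (Set.Ioo 0 T)) :=
        (Measurable.aestronglyMeasurable (by measurability))
      have h3 : AEStronglyMeasurable (fun t => uu f t ^ (p-1))
          (volume.restrict (Set.Ioo 0 T)) := by
        apply ContinuousOn.aestronglyMeasurable ?_ measurableSet_Ioo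
        apply ContinuousOn.rpow_const hucont
        intro x hx
        exact Or.inr (by linarith)
      exact (h2.mul h3).mul hf'meas.neg
    have hdomint : IntegrableOn (fun t => (p-1)/p * gg n p f t + 1/p * b t) (Set.Ioo 0 T) :=
      (hGg.const_mul ((p-1)/p)).add (hB.const_mul (1/p))
    have hH : IntegrableOn (hh n p f f') (Set.Ioo 0 T) := by
      apply Integrable.mono' hdomint hhmeas
      rw [ae_restrict_iff' measurableSet_Ioo]
      refine ae_of_all _ (fun t ht => ?_)
      rw [Real.norm_of_nonneg (hhnn t ht)]
      exact young_pt hp1 hanti hfi hf'np ht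
    set A : ℝ := ∫ t in Set.Ioo (0:ℝ) T, gg n p f t with hAdef
    set H : ℝ := ∫ t in Set.Ioo (0:ℝ) T, hh n p f f' t with hHdef
    set Bv : ℝ := ∫ t in Set.Ioo (0:ℝ) T, b t with hBvdef
    have hAnn : 0 ≤ A := setIntegral_nonneg measurableSet_Ioo hgnn
    have hHB : H ≤ (p-1)/p * A + 1/p * Bv := by
      have h4 := setIntegral_mono_on hH hdomint
        measurableSet_Ioo (fun t ht => young_pt hp1 hanti hfi hf'np ht)
      rwa [MeasureTheory.integral_add (hGg.const_mul ((p-1)/p)) (hB.const_mul (1/p)),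
        MeasureTheory.integral_const_mul, MeasureTheory.integral_const_mul] at h4
    have hc0 : (0:ℝ) < p + p/(n:ℝ) - 1 := by
      have : 0 < p/(n:ℝ) := by positivity
      linarith
    have main_ab : ∀ a ∈ Set.Ioo (0:ℝ) T, ∀ c ∈ Set.Ioo (0:ℝ) T, a ≤ c →
        (p + p/(n:ℝ) - 1) * ∫ t in Set.Ioc a c, gg n p f t ≤ p * H + FF n p f a := by
      intro a ha c hc hac
      have hsub : Set.uIcc a c ⊆ Set.Ioo 0 T := by
        rw [Set.uIcc_of_le hac]
        intro x hx
        exact ⟨lt_of_lt_of_le ha.1 hx.1, lt_of_le_of_lt hx.2 hc.2⟩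
      have hsub2 : Set.Ioc a c ⊆ Set.Ioo 0 T := fun x hx =>
        ⟨lt_trans ha.1 hx.1, lt_of_le_of_lt hx.2 hc.2⟩
      have hgint : IntervalIntegrable (gg n p f) volume a c := by
        rw [intervalIntegrable_iff, Set.uIoc_of_le hac]
        exact hGg.mono_set hsub2
      have hhint : IntervalIntegrable (hh n p f f') volume a c := by
        rw [intervalIntegrable_iff, Set.uIoc_of_le hac]
        exact hH.mono_set hsub2
      have hftc : ∫ t in a..c, ((1 - p/(n:ℝ) - p) * gg n p f t + p * hh n p f f' t)
          = FF n p f c - FF n p f a :=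
        intervalIntegral.integral_eq_sub_of_hasDerivAt
          (fun t ht => FF_hasDeriv hp1 hanti hfi hcont hderiv (hsub ht))
          ((hgint.const_mul _).add (hhint.const_mul _))
      rw [intervalIntegral.integral_add (hgint.const_mul _) (hhint.const_mul _),
        intervalIntegral.integral_const_mul, intervalIntegral.integral_const_mul,
        intervalIntegral.integral_of_le hac, intervalIntegral.integral_of_le hac] at hftc
      have h5 : ∫ t in Set.Ioc a c, hh n p f f' t ≤ H := by
        apply setIntegral_mono_set hH
          ((ae_restrict_iff' measurableSet_Ioo).2 (ae_of_all _ hhnn))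
          (HasSubset.Subset.eventuallyLE hsub2)
      have h6 : p * ∫ t in Set.Ioc a c, hh n p f f' t ≤ p * H :=
        mul_le_mul_of_nonneg_left h5 hp0.le
      have h7 : (p + p/(n:ℝ) - 1) * ∫ t in Set.Ioc a c, gg n p f t
          = -((1 - p/(n:ℝ) - p) * ∫ t in Set.Ioc a c, gg n p f t) := by ring
      have hFc : 0 ≤ FF n p f c := hFnn c hc
      linarith [hftc, h6, hFc]
    have L1 : ∀ a ∈ Set.Ioo (0:ℝ) T,
        (p + p/(n:ℝ) - 1) * ∫ t in Set.Ioo a T, gg n p f t ≤ p * H + FF n p f a := by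
      intro a ha
      have hTa : (0:ℝ) < T - a := by linarith [ha.2]
      set s : ℕ → Set ℝ := fun k => Set.Ioc a (T - (T - a)/(k+1)) with hsdef
      have hsm : ∀ k, MeasurableSet (s k) := fun k => measurableSet_Ioc
      have hmono : Monotone s := by
        intro k m hkm
        apply Set.Ioc_subset_Ioc_right
        have hk1 : ((k:ℝ)+1) ≤ (m:ℝ)+1 := by
          have : (k:ℝ) ≤ m := Nat.cast_le.2 hkm
          linarith
        have h20 : (T-a)/((m:ℝ)+1) ≤ (T-a)/((k:ℝ)+1) := by
          rw [div_le_div_iff₀ (by positivity) (by positivity)]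
          nlinarith
        linarith
      have hun : (⋃ k, s k) = Set.Ioo a T := my_union1 ha.1 ha.2
      have htend := MeasureTheory.tendsto_setIntegral_of_monotone hsm hmono
        (by rw [hun]; exact hGg.mono_set (fun x hx => ⟨lt_trans ha.1 hx.1, hx.2⟩))
      rw [hun] at htend
      apply le_of_tendsto (htend.const_mul (p + p/(n:ℝ) - 1))
      apply Filter.Eventually.of_forall
      intro k
      have hk2 : (T - a)/((k:ℝ)+1) ≤ T - a := by
        apply div_le_self hTa.le
        have : (0:ℝ) ≤ (k:ℝ) := Nat.cast_nonneg k
        linarith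
      have hk3 : (0:ℝ) < (T - a)/((k:ℝ)+1) := by positivity
      have hck : T - (T - a)/((k:ℝ)+1) ∈ Set.Ioo (0:ℝ) T :=
        ⟨by linarith [ha.1], by linarith⟩
      exact main_ab a ha _ hck (by linarith)
    have L2 : (p + p/(n:ℝ) - 1) * A ≤ p * H := by
      apply le_of_forall_pos_le_add
      intro η hη
      set s : ℕ → Set ℝ := fun k => Set.Ioo (T/(k+2)) T with hsdef
      have hsm : ∀ k, MeasurableSet (s k) := fun k => measurableSet_Ioo
      have hmono : Monotone s := by
        intro k m hkm
        apply Set.Ioo_subset_Ioo_left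
        have hk1 : ((k:ℝ)+2) ≤ (m:ℝ)+2 := by
          have : (k:ℝ) ≤ m := Nat.cast_le.2 hkm
          linarith
        rw [div_le_div_iff₀ (by positivity) (by positivity)]
        nlinarith
      have hun : (⋃ k, s k) = Set.Ioo 0 T := my_union2 hT
      have htend := MeasureTheory.tendsto_setIntegral_of_monotone hsm hmono
        (by rw [hun]; exact hGg)
      rw [hun] at htend
      have htend2 := htend.const_mul (p + p/(n:ℝ) - 1)
      have hev : ∀ᶠ k : ℕ in atTop,
          (p + p/(n:ℝ) - 1) * A - η/2 < (p + p/(n:ℝ) - 1) * ∫ t in s k, gg n p f t :=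
        htend2.eventually (eventually_gt_nhds (by linarith))
      obtain ⟨k, hk⟩ := hev.exists
      have ha₀ : T/((k:ℝ)+2) ∈ Set.Ioo (0:ℝ) T := by
        constructor
        · positivity
        · apply div_lt_self hT
          have : (0:ℝ) ≤ (k:ℝ) := Nat.cast_nonneg k
          linarith
      have hex : ∃ a ∈ Set.Ioc (0:ℝ) (T/((k:ℝ)+2)), FF n p f a ≤ η/2 := by
        by_contra hno
        push_neg at hno
        have hdom : IntegrableOn (fun x : ℝ => η/2 * x⁻¹) (Set.Ioo 0 (T/((k:ℝ)+2))) := by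
          apply Integrable.mono'
            (hGg.mono_set (fun x hx => ⟨hx.1, lt_trans hx.2 ha₀.2⟩))
            ((measurable_inv.const_mul _).aestronglyMeasurable)
          rw [ae_restrict_iff' measurableSet_Ioo]
          refine ae_of_all _ (fun x hx => ?_)
          have hx0 : (0:ℝ) < x := hx.1
          have hx' : x ∈ Set.Ioo (0:ℝ) T := ⟨hx.1, lt_trans hx.2 ha₀.2⟩
          have hF9 := (hno x ⟨hx.1, hx.2.le⟩).le
          have hFx : FF n p f x = x * gg n p f x := by
            simp only [FF, gg]
            rw [show (1 - p/(n:ℝ)) = 1 + -(p/(n:ℝ)) by ring, Real.rpow_add hx0,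
              Real.rpow_one]
            ring
          rw [hFx] at hF9
          rw [Real.norm_of_nonneg (by positivity)]
          have h9 : η/2 * x⁻¹ ≤ (x * gg n p f x) * x⁻¹ :=
            mul_le_mul_of_nonneg_right hF9 (inv_nonneg.2 hx0.le)
          rw [mul_comm x (gg n p f x), mul_assoc, mul_inv_cancel₀ hx0.ne', mul_one] at h9
          exact h9
        have hdom2 : IntegrableOn (fun x : ℝ => x⁻¹) (Set.Ioo 0 (T/((k:ℝ)+2))) := by
          have h10 : IntegrableOn (fun x : ℝ => (η/2)⁻¹ * (η/2 * x⁻¹))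
              (Set.Ioo 0 (T/((k:ℝ)+2))) := hdom.const_mul (η/2)⁻¹
          apply h10.congr_fun ?_ measurableSet_Ioo
          intro x _
          dsimp only
          rw [inv_mul_cancel_left₀ (by positivity : (η/2 : ℝ) ≠ 0)]
        exact my_not_int ha₀.1 hdom2
      obtain ⟨a, ha, hFa⟩ := hex
      have ha' : a ∈ Set.Ioo (0:ℝ) T := ⟨ha.1, lt_of_le_of_lt ha.2 ha₀.2⟩
      have h11 : ∫ t in s k, gg n p f t ≤ ∫ t in Set.Ioo a T, gg n p f t := by
        apply setIntegral_mono_set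
          (hGg.mono_set (fun x hx => ⟨lt_trans ha'.1 hx.1, hx.2⟩))
          ((ae_restrict_iff' measurableSet_Ioo).2 (ae_of_all _
            (fun t ht => hgnn t ⟨lt_trans ha'.1 ht.1, ht.2⟩)))
          (HasSubset.Subset.eventuallyLE (Set.Ioo_subset_Ioo_left ha.2))
      have h12 := L1 a ha'
      have h13 : (p + p/(n:ℝ) - 1) * ∫ t in s k, gg n p f t
          ≤ (p + p/(n:ℝ) - 1) * ∫ t in Set.Ioo a T, gg n p f t :=
        mul_le_mul_of_nonneg_left h11 hc0.le
      linarith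
    have habs : A ≤ ((n:ℝ)/p) * Bv := by
      have h14 : p * H ≤ p * ((p-1)/p * A + 1/p * Bv) := mul_le_mul_of_nonneg_left hHB hp0.le
      have c1 : p * ((p-1)/p) = p - 1 := by field_simp
      have c2 : p * (1/p) = 1 := by field_simp
      have h15 : p * ((p-1)/p * A + 1/p * Bv) = (p-1) * A + Bv := by
        rw [mul_add, ← mul_assoc, ← mul_assoc, c1, c2, one_mul]
      have h17 : (p + p/(n:ℝ) - 1) * A = (p-1) * A + (p/(n:ℝ)) * A := by ring
      have h16 : (p/(n:ℝ)) * A ≤ Bv := by linarith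
      have h18 : ((n:ℝ)/p) * ((p/(n:ℝ)) * A) ≤ ((n:ℝ)/p) * Bv :=
        mul_le_mul_of_nonneg_left h16 (by positivity)
      have c3 : ((n:ℝ)/p) * (p/(n:ℝ)) = 1 := by
        field_simp
      have h19 : ((n:ℝ)/p) * ((p/(n:ℝ)) * A) = A := by
        rw [← mul_assoc, c3, one_mul]
      linarith
    have hLHS : (∫ t in (0:ℝ)..T,
        ((((1 / t) * ∫ s in (0 : ℝ)..t, f s) - f t) * t ^ (1 / pbar)) ^ p / t) = A := by
      rw [hAdef, intervalIntegral.integral_of_le hT.le,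
        MeasureTheory.integral_Ioc_eq_integral_Ioo]
      apply MeasureTheory.setIntegral_congr_fun measurableSet_Ioo
      intro t ht
      have ht0 : (0:ℝ) < t := ht.1
      have hut := uu_nonneg hanti hfi ht
      have hexp : 1/pbar * p = 1 - p/(n:ℝ) := by
        rw [hpbar]
        field_simp
      show ((uu f t) * t ^ (1/pbar)) ^ p / t = gg n p f t
      rw [Real.mul_rpow hut (Real.rpow_nonneg ht0.le _), ← Real.rpow_mul ht0.le, hexp]
      simp only [gg]
      rw [show (1 - p/(n:ℝ)) = 1 + -(p/(n:ℝ)) by ring, Real.rpow_add ht0, Real.rpow_one]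
      field_simp
    rw [hLHS, hRHSint]
    calc A ^ ((1:ℝ)/p) ≤ (((n:ℝ)/p) * Bv) ^ ((1:ℝ)/p) :=
        Real.rpow_le_rpow hAnn habs (by positivity)
      _ = ((n:ℝ)/p) ^ ((1:ℝ)/p) * Bv ^ ((1:ℝ)/p) := Real.mul_rpow (by positivity) hBnn
  · -- f is not integrable near 0 : the primitive is the junk value 0
    have hI0 : ∀ t ∈ Set.Ioo (0:ℝ) T, (∫ s in (0:ℝ)..t, f s) = 0 := by
      intro t ht
      apply intervalIntegral.integral_undef
      intro hii
      apply hfi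
      have h1 : IntegrableOn f (Set.Ioc 0 t) := by
        rw [intervalIntegrable_iff] at hii
        simpa [Set.uIoc_of_le ht.1.le] using hii
      have h2 : IntegrableOn f (Set.Ico t T) := by
        apply Integrable.mono' (g := fun _ => f t)
        · exact integrableOn_const measure_Ico_lt_top.ne
        · exact (hcont.mono (fun x hx => ⟨lt_of_lt_of_le ht.1 hx.1, hx.2⟩)).aestronglyMeasurable
            measurableSet_Ico
        · rw [ae_restrict_iff' measurableSet_Ico]
          refine ae_of_all _ (fun x hx => ?_)
          have hx' : x ∈ Set.Ioo (0:ℝ) T := ⟨lt_of_lt_of_le ht.1 hx.1, hx.2⟩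
          rw [Real.norm_of_nonneg (hfnn x hx'.1 hx'.2)]
          exact hanti ht hx' hx.1
      apply (h1.union h2).mono_set
      intro x hx
      rcases le_or_gt x t with h | h
      · exact Or.inl ⟨hx.1, h⟩
      · exact Or.inr ⟨h.le, hx.2⟩
    by_cases hcos : Real.cos (p * π) = 0
    · have hL : (∫ t in (0:ℝ)..T,
          ((((1 / t) * ∫ s in (0 : ℝ)..t, f s) - f t) * t ^ (1 / pbar)) ^ p / t) = 0 := by
        rw [intervalIntegral.integral_of_le hT.le, MeasureTheory.integral_Ioc_eq_integral_Ioo]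
        have hz : Set.EqOn
            (fun t => ((((1 / t) * ∫ s in (0 : ℝ)..t, f s) - f t) * t ^ (1 / pbar)) ^ p / t)
            (fun _ => (0:ℝ)) (Set.Ioo 0 T) := by
          intro t ht
          dsimp only
          rw [hI0 t ht, mul_zero, zero_sub]
          rcases eq_or_lt_of_le (hfnn t ht.1 ht.2) with h | h
          · rw [← h, neg_zero, zero_mul, Real.zero_rpow (ne_of_gt hp0), zero_div]
          · have hbase : -f t * t ^ (1/pbar) < 0 := by
              have : (0:ℝ) < t ^ (1/pbar) := Real.rpow_pos_of_pos ht.1 _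
              nlinarith
            rw [Real.rpow_def_of_neg hbase, hcos, mul_zero, zero_div]
        rw [MeasureTheory.setIntegral_congr_fun measurableSet_Ioo hz,
          MeasureTheory.integral_zero]
      rw [hL, Real.zero_rpow (one_div_ne_zero (ne_of_gt hp0))]
      apply mul_nonneg (Real.rpow_pos_of_pos (by positivity) _).le
      exact Real.rpow_nonneg (by rw [hRHSint]; exact hBnn) _
    · exfalso
      apply hfi
      have hΦ : IntegrableOn (fun t => t ^ (-(p/(n:ℝ))) * f t ^ p) (Set.Ioo 0 T) := by
        have step1 : IntegrableOn
            (fun t => Real.cos (p * π) * (t ^ (-(p/(n:ℝ))) * f t ^ p)) (Set.Ioo 0 T) := by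
          apply hG.congr_fun ?_ measurableSet_Ioo
          intro t ht
          dsimp only
          rw [hI0 t ht, mul_zero, zero_sub]
          rcases eq_or_lt_of_le (hfnn t ht.1 ht.2) with h | h
          · rw [← h]
            simp [Real.zero_rpow (ne_of_gt hp0)]
          · rw [Real.rpow_def_of_neg (by linarith : -f t < 0), Real.log_neg_eq_log,
              ← Real.rpow_def_of_pos h]
            ring
        have step2 : IntegrableOn
            (fun t => (Real.cos (p * π))⁻¹ * (Real.cos (p * π) * (t ^ (-(p/(n:ℝ))) * f t ^ p)))
            (Set.Ioo 0 T) := step1.const_mul _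
        apply step2.congr_fun ?_ measurableSet_Ioo
        intro t _
        dsimp only
        exact inv_mul_cancel_left₀ hcos _
      apply Integrable.mono'
        (g := fun t => T ^ ((1:ℝ)/(n:ℝ)) * (1 + t ^ (-(p/(n:ℝ))) * f t ^ p))
      · exact ((integrableOn_const measure_Ioo_lt_top.ne).add hΦ).const_mul _
      · exact hcont.aestronglyMeasurable measurableSet_Ioo
      · rw [ae_restrict_iff' measurableSet_Ioo]
        refine ae_of_all _ (fun t ht => ?_)
        have hft := hfnn t ht.1 ht.2
        have hΦnn : 0 ≤ t ^ (-(p/(n:ℝ))) * f t ^ p :=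
          mul_nonneg (Real.rpow_nonneg ht.1.le _) (Real.rpow_nonneg hft _)
        rw [Real.norm_of_nonneg hft]
        have key : f t = (t ^ (-(p/(n:ℝ))) * f t ^ p) ^ ((1:ℝ)/p) * t ^ ((1:ℝ)/(n:ℝ)) := by
          rw [Real.mul_rpow (Real.rpow_nonneg ht.1.le _) (Real.rpow_nonneg hft _),
            ← Real.rpow_mul ht.1.le, ← Real.rpow_mul hft,
            show -(p/(n:ℝ)) * ((1:ℝ)/p) = -((1:ℝ)/(n:ℝ)) by field_simp [mul_comm],
            show p * ((1:ℝ)/p) = 1 by field_simp, Real.rpow_one,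
            mul_assoc, mul_comm (f t), ← mul_assoc, ← Real.rpow_add ht.1]
          norm_num
        calc f t = (t ^ (-(p/(n:ℝ))) * f t ^ p) ^ ((1:ℝ)/p) * t ^ ((1:ℝ)/(n:ℝ)) := key
          _ ≤ (1 + t ^ (-(p/(n:ℝ))) * f t ^ p) * T ^ ((1:ℝ)/(n:ℝ)) := by
              apply mul_le_mul (my_rpow_le_add_one hΦnn hp1)
                (Real.rpow_le_rpow ht.1.le ht.2.le (by positivity))
                (Real.rpow_nonneg ht.1.le _) (by linarith)
          _ = T ^ ((1:ℝ)/(n:ℝ)) * (1 + t ^ (-(p/(n:ℝ))) * f t ^ p) := mul_comm _ _
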